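/- Let q : (0,∞) → ℝ be C¹ and suppose there exist x₀ ≥ 1 and q₀ < 0 with q(x) ≤ q₀ for all x ≥ x₀. Define Q(y) = 2∫₁^y q(x) dx for y ≥ 1. If ∫_{x₀}^∞ 1/q(x) dx > −∞ and liminf_{x→∞} q′(x)/q(x)² > −2, then ∫₁^∞ e^{−Q(y)} (∫_y^∞ e^{Q(z)} dz) dy < ∞ (i.e., condition (H3) holds). -/

import Mathlib

open MeasureTheory Set Filter Real

lemma auxIn {a b z : ℝ} (t : ℝ) : HasDerivAt (fun t : ℝ => a + b * (z - t)) (-b) t := by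
  have h := ((hasDerivAt_id t).const_mul b).const_sub (a + b * z)
  have : (fun x : ℝ => a + b * z - b * x) = fun t : ℝ => a + b * (z - t) := by
    funext x; ring
  simpa [this] using h

lemma auxB {a b y z : ℝ} (ha : 0 < a) (hb : 0 < b) (hyz : y ≤ z) :
    ∫ t in y..z, -(a + b * (z - t))⁻¹ =
      (Real.log a - Real.log (a + b * (z - y))) / b := by
  have hu : ∀ t ∈ Icc y z, 0 < a + b * (z - t) := by
    intro t ht
    have : 0 ≤ z - t := by linarith [ht.2]
    nlinarith
  have hderiv : ∀ t ∈ uIcc y z,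
      HasDerivAt (fun t => Real.log (a + b * (z - t)) / b) (-(a + b * (z - t))⁻¹) t := by
    intro t ht
    rw [uIcc_of_le hyz] at ht
    have h2 := ((auxIn (a := a) (b := b) (z := z) t).log (ne_of_gt (hu t ht))).div_const b
    have hne : a + b * (z - t) ≠ 0 := ne_of_gt (hu t ht)
    have hbne : b ≠ 0 := ne_of_gt hb
    have : -b / (a + b * (z - t)) / b = -(a + b * (z - t))⁻¹ := by
      field_simp
    rwa [this] at h2
  have hint : IntervalIntegrable (fun t => -(a + b * (z - t))⁻¹) volume y z := by
    apply ContinuousOn.intervalIntegrable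
    rw [uIcc_of_le hyz]
    exact ((continuous_const.add (continuous_const.mul
      (continuous_const.sub continuous_id))).continuousOn.inv₀
      (fun t ht => ne_of_gt (hu t ht))).neg
  rw [intervalIntegral.integral_eq_sub_of_hasDerivAt hderiv hint]
  rw [show z - z = 0 by ring]
  ring_nf

lemma auxA {a b z x₁ : ℝ} (ha : 0 < a) (hb1 : 1 ≤ b) (hb2 : b < 2) (hxz : x₁ ≤ z) :
    ∫ y in x₁..z, a ^ (2/b) * (a + b * (z - y)) ^ (-(2/b)) ≤ a / (2 - b) := by
  have hb0 : (0:ℝ) < b := by linarith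
  set p : ℝ := 2 / b with hp
  have hbp : b * p = 2 := by rw [hp]; field_simp [ne_of_gt hb0]
  have hp1 : 1 < p := (one_lt_div hb0).2 hb2
  have h2b : (0:ℝ) < 2 - b := by linarith
  have hu : ∀ y ∈ Icc x₁ z, 0 < a + b * (z - y) := by
    intro y hy
    have : 0 ≤ z - y := by linarith [hy.2]
    nlinarith
  have hderiv : ∀ y ∈ uIcc x₁ z,
      HasDerivAt (fun y => a ^ p / (2 - b) * (a + b * (z - y)) ^ (1 - p))
        (a ^ p * (a + b * (z - y)) ^ (-p)) y := by
    intro y hy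
    rw [uIcc_of_le hxz] at hy
    have h2 := ((auxIn (a := a) (b := b) (z := z) y).rpow_const
      (p := 1 - p) (Or.inl (ne_of_gt (hu y hy)))).const_mul (a ^ p / (2 - b))
    have heq : a ^ p / (2 - b) * (-b * (1 - p) * (a + b * (z - y)) ^ (1 - p - 1))
        = a ^ p * (a + b * (z - y)) ^ (-p) := by
      rw [show (1 : ℝ) - p - 1 = -p by ring]
      rw [show -b * (1 - p) = 2 - b by nlinarith]
      have h2bne : (2:ℝ) - b ≠ 0 := ne_of_gt h2b
      field_simp
    rwa [heq] at h2
  have hint : IntervalIntegrable (fun y => a ^ p * (a + b * (z - y)) ^ (-p)) volume x₁ z := by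
    apply ContinuousOn.intervalIntegrable
    rw [uIcc_of_le hxz]
    exact continuousOn_const.mul (((continuous_const.add (continuous_const.mul
      (continuous_const.sub continuous_id))).continuousOn).rpow_const
      (fun y hy => Or.inl (ne_of_gt (hu y hy))))
  rw [intervalIntegral.integral_eq_sub_of_hasDerivAt hderiv hint]
  rw [show z - z = 0 by ring]
  have h1 : a ^ p / (2 - b) * (a + b * 0) ^ (1 - p) = a / (2 - b) := by
    rw [mul_zero, add_zero, div_mul_eq_mul_div, ← Real.rpow_add ha]
    norm_num
  rw [h1]
  have h2 : 0 ≤ a ^ p / (2 - b) * (a + b * (z - x₁)) ^ (1 - p) := by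
    apply mul_nonneg (div_nonneg (Real.rpow_nonneg ha.le p) h2b.le)
    apply Real.rpow_nonneg
    nlinarith
  linarith

/-- For `q` C¹ on `(0,∞)` with `q ≤ q₀ < 0` on `[x₀,∞)`,
`∫_{x₀}^∞ dx/q(x) > -∞` and `liminf_{x→∞} q'(x)/q(x)² > -2`, condition (H3) holds:
`∫₁^∞ e^{-Q(y)} ∫_y^∞ e^{Q(z)} dz dy < ∞`, where `Q(y) = 2∫₁^y q`. -/
theorem stmt11 (q : ℝ → ℝ) (hq : ContDiffOn ℝ 1 q (Ioi 0))
    (x₀ : ℝ) (hx₀ : 1 ≤ x₀) (q₀ : ℝ) (hq₀ : q₀ < 0)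
    (hqub : ∀ x ≥ x₀, q x ≤ q₀)
    (Q : ℝ → ℝ) (hQ : ∀ y, Q y = 2 * ∫ x in (1:ℝ)..y, q x)
    (hint : (∫⁻ x in Ici x₀, ENNReal.ofReal (-(1 / q x))) < ⊤)
    (hliminf : ∃ c : ℝ, -2 < c ∧ ∀ᶠ x in atTop, c ≤ deriv q x / (q x) ^ 2) :
    (∫⁻ y in Ici (1:ℝ), ENNReal.ofReal (Real.exp (-Q y)) *
      ∫⁻ z in Ici y, ENNReal.ofReal (Real.exp (Q z))) < ⊤ := by
  obtain ⟨c, hc2, hcev⟩ := hliminf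
  obtain ⟨x₁', hx₁'⟩ := eventually_atTop.1 hcev
  set b : ℝ := -(min c (-1)) with hbdef
  have hminle : min c (-1) ≤ -1 := min_le_right _ _
  have hminlt : -2 < min c (-1) := lt_min hc2 (by norm_num)
  have hb1 : 1 ≤ b := by simp only [hbdef]; linarith
  have hb2 : b < 2 := by simp only [hbdef]; linarith
  have hb0 : (0:ℝ) < b := by linarith
  set p : ℝ := 2 / b with hpdef
  have hp1 : 1 < p := (one_lt_div hb0).2 hb2
  set x₁ : ℝ := max x₀ x₁' with hx1def
  have hx₀x₁ : x₀ ≤ x₁ := le_max_left _ _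
  have h1x₁ : 1 ≤ x₁ := le_trans hx₀ hx₀x₁
  have h0x₁ : (0:ℝ) < x₁ := lt_of_lt_of_le one_pos h1x₁
  have hqneg : ∀ x, x₀ ≤ x → q x < 0 := fun x hx => lt_of_le_of_lt (hqub x hx) hq₀
  have hcq : ∀ x, x₁ ≤ x → -b ≤ deriv q x / q x ^ 2 := by
    intro x hx
    have h1 : c ≤ deriv q x / q x ^ 2 := hx₁' x (le_trans (le_max_right _ _) hx)
    have : -b ≤ c := by simp only [hbdef]; rw [neg_neg]; exact min_le_left _ _
    linarith
  have hqcont : ContinuousOn q (Ioi 0) := hq.continuousOn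
  set r : ℝ → ℝ := fun z => -(q (max z x₁))⁻¹ with hrdef
  have hmaxpos : ∀ z : ℝ, (0:ℝ) < max z x₁ := fun z => lt_of_lt_of_le h0x₁ (le_max_right _ _)
  have hqmaxneg : ∀ z, q (max z x₁) < 0 := fun z => hqneg _ (le_trans hx₀x₁ (le_max_right z x₁))
  have hrpos : ∀ z, 0 < r z := by
    intro z
    simp only [hrdef]
    rw [neg_pos]
    exact inv_lt_zero.2 (hqmaxneg z)
  have hrcont : Continuous r := by
    have h1 : Continuous fun z => q (max z x₁) :=
      hqcont.comp_continuous (continuous_id.max continuous_const) (fun z => hmaxpos z)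
    exact (h1.inv₀ (fun z => ne_of_lt (hqmaxneg z))).neg
  have hreq : ∀ z, x₁ ≤ z → r z = -(q z)⁻¹ := by
    intro z hz; simp only [hrdef, max_eq_left hz]
  have hqderiv : ∀ x, 0 < x → HasDerivAt q (deriv q x) x := fun x hx =>
    ((hq.differentiableOn one_ne_zero).differentiableAt (isOpen_Ioi.mem_nhds hx)).hasDerivAt
  have hrderiv : ∀ x, x₁ < x → HasDerivAt r (deriv q x / q x ^ 2) x := by
    intro x hx
    have hx0 : (0:ℝ) < x := lt_trans h0x₁ hx
    have hqx : q x ≠ 0 := ne_of_lt (hqneg x (le_trans hx₀x₁ hx.le))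
    have h1 : HasDerivAt (fun u => -(q u)⁻¹) (deriv q x / q x ^ 2) x := by
      have h2 := ((hqderiv x hx0).inv hqx).neg
      simp [neg_div] at h2
      exact h2
    apply h1.congr_of_eventuallyEq
    filter_upwards [Ioi_mem_nhds hx] with u hu
    simp [hrdef, max_eq_left (le_of_lt (mem_Ioi.1 hu))]
  have hmono : MonotoneOn (fun x => r x + b * x) (Ici x₁) := by
    have hD : ∀ x ∈ interior (Ici x₁), HasDerivAt (fun x => r x + b * x)
        (deriv q x / q x ^ 2 + b) x := by
      intro x hx
      rw [interior_Ici] at hx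
      have := (hrderiv x hx).add ((hasDerivAt_id' x).const_mul b)
      rw [mul_one] at this
      exact this
    have hcontsum : Continuous fun x : ℝ => r x + b * x :=
      hrcont.add (continuous_const.mul continuous_id)
    apply monotoneOn_of_deriv_nonneg (f := fun x => r x + b * x) (convex_Ici x₁)
      hcontsum.continuousOn
    · intro x hx
      exact (hD x hx).differentiableAt.differentiableWithinAt
    · intro x hx
      rw [(hD x hx).deriv]
      have hx' : x₁ ≤ x := by rw [interior_Ici] at hx; exact le_of_lt hx
      linarith [hcq x hx']
  have hrbound : ∀ t z, x₁ ≤ t → t ≤ z → r t ≤ r z + b * (z - t) := by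
    intro t z ht hz
    have h := hmono (mem_Ici.2 ht) (mem_Ici.2 (le_trans ht hz)) hz
    simp only at h
    nlinarith
  have hqle : ∀ t z, x₁ ≤ t → t ≤ z → q t ≤ -(r z + b * (z - t))⁻¹ := by
    intro t z ht hz
    have hrt : 0 < r t := hrpos t
    have hub := hrbound t z ht hz
    have hu : 0 < r z + b * (z - t) := lt_of_lt_of_le hrt hub
    have h1 : (r z + b * (z - t))⁻¹ ≤ (r t)⁻¹ := by
      apply inv_anti₀ hrt hub
    have h2 : q t = -(r t)⁻¹ := by
      have hq0 : q t ≠ 0 := ne_of_lt (hqneg t (le_trans hx₀x₁ ht))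
      rw [hreq t ht]
      field_simp
    rw [h2]
    linarith
  have hQint : ∀ t, 1 ≤ t → IntervalIntegrable q volume 1 t := by
    intro t ht
    apply ContinuousOn.intervalIntegrable
    apply hqcont.mono
    rw [uIcc_of_le ht]
    intro u hu
    exact lt_of_lt_of_le one_pos hu.1
  have hQsub : ∀ y z, 1 ≤ y → y ≤ z → Q z - Q y = 2 * ∫ t in y..z, q t := by
    intro y z hy hz
    rw [hQ z, hQ y, ← mul_sub,
      intervalIntegral.integral_interval_sub_left (hQint z (le_trans hy hz)) (hQint y hy)]
  have hqleint : ∀ y z, 1 ≤ y → y ≤ z → IntervalIntegrable q volume y z := by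
    intro y z hy hz
    apply ContinuousOn.intervalIntegrable
    apply hqcont.mono
    rw [uIcc_of_le hz]
    intro u hu
    exact lt_of_lt_of_le one_pos (le_trans hy hu.1)
  have hkey : ∀ y z, x₁ ≤ y → y ≤ z →
      Real.exp (Q z - Q y) ≤ r z ^ p * (r z + b * (z - y)) ^ (-p) := by
    intro y z hy hz
    have h1y : (1:ℝ) ≤ y := le_trans h1x₁ hy
    have hrz : 0 < r z := hrpos z
    have huz : 0 < r z + b * (z - y) := lt_of_lt_of_le (hrpos y) (hrbound y z hy hz)
    have hIq : (∫ t in y..z, q t) ≤ (Real.log (r z) - Real.log (r z + b * (z - y))) / b := by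
      rw [← auxB hrz hb0 hz]
      apply intervalIntegral.integral_mono_on hz (hqleint y z h1y hz)
      · apply ContinuousOn.intervalIntegrable
        rw [uIcc_of_le hz]
        apply ContinuousOn.neg
        apply ContinuousOn.inv₀
        · exact (continuous_const.add (continuous_const.mul
            (continuous_const.sub continuous_id))).continuousOn
        · intro t ht
          have : 0 ≤ z - t := by linarith [ht.2]
          have : 0 < r z + b * (z - t) := by nlinarith
          exact ne_of_gt this
      · intro t ht
        exact hqle t z (le_trans hy ht.1) ht.2
    rw [hQsub y z h1y hz]
    have hexp : Real.exp (2 * ∫ t in y..z, q t) ≤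
        Real.exp (2 * ((Real.log (r z) - Real.log (r z + b * (z - y))) / b)) :=
      Real.exp_le_exp.2 (by linarith)
    apply le_trans hexp
    apply le_of_eq
    rw [Real.rpow_def_of_pos hrz, Real.rpow_def_of_pos huz, ← Real.exp_add]
    congr 1
    have hbne : b ≠ 0 := ne_of_gt hb0
    rw [hpdef]
    ring
  set g : ℝ × ℝ → ℝ := fun w => r w.2 ^ p * ((r w.2 + b * max (w.2 - w.1) 0) ^ p)⁻¹
    with hgdef
  have hup : ∀ w : ℝ × ℝ, (0:ℝ) < r w.2 + b * max (w.2 - w.1) 0 := fun w =>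
    add_pos_of_pos_of_nonneg (hrpos _) (mul_nonneg hb0.le (le_max_right _ _))
  have hgcont : Continuous g := by
    have hu : Continuous fun w : ℝ × ℝ => r w.2 + b * max (w.2 - w.1) 0 :=
      ((hrcont.comp continuous_snd).add (continuous_const.mul
        ((continuous_snd.sub continuous_fst).max continuous_const)))
    exact ((hrcont.comp continuous_snd).rpow_const
      (fun w => Or.inl (ne_of_gt (hrpos _)))).mul
      ((hu.rpow_const (fun w => Or.inl (ne_of_gt (hup w)))).inv₀
        (fun w => ne_of_gt (Real.rpow_pos_of_pos (hup w) p)))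
  have hgnn : ∀ w, 0 ≤ g w := fun w =>
    mul_nonneg (Real.rpow_nonneg (hrpos _).le p)
      (inv_nonneg.2 (Real.rpow_nonneg (hup w).le p))
  set S : Set (ℝ × ℝ) := {w | x₁ ≤ w.1 ∧ w.1 ≤ w.2} with hSdef
  have hSmeas : MeasurableSet S := by
    apply MeasurableSet.inter
    · exact measurableSet_le measurable_const measurable_fst
    · exact measurableSet_le measurable_fst measurable_snd
  set F : ℝ × ℝ → ENNReal := S.indicator fun w => ENNReal.ofReal (g w) with hFdef
  have hFmeas : Measurable F :=
    (hgcont.measurable.ennreal_ofReal).indicator hSmeas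
  have hgeq : ∀ y z, y ≤ z → g (y, z) = r z ^ p * (r z + b * (z - y)) ^ (-p) := by
    intro y z hz
    have hmax : max (z - y) 0 = z - y := max_eq_left (by linarith)
    have huz : (0:ℝ) ≤ r z + b * (z - y) := by
      have := hup (y, z)
      simp only [hmax] at this ⊢
      linarith
    simp only [hgdef, hmax, Real.rpow_neg huz]
  have hgF : ∀ y z, x₁ ≤ y → y ≤ z →
      ENNReal.ofReal (Real.exp (Q z - Q y)) ≤ F (y, z) := by
    intro y z hy hz
    have hmem : (y, z) ∈ S := ⟨hy, hz⟩
    rw [hFdef, indicator_of_mem hmem]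
    apply ENNReal.ofReal_le_ofReal
    rw [hgeq y z hz]
    exact hkey y z hy hz
  have hInner : ∀ z : ℝ, (∫⁻ y, F (y, z)) ≤
      (Ici x₁).indicator (fun z => ENNReal.ofReal (r z / (2 - b))) z := by
    intro z
    have hfe : ∀ y, F (y, z) = (Icc x₁ z).indicator
        (fun y => ENNReal.ofReal (g (y, z))) y := by
      intro y
      by_cases h : y ∈ Icc x₁ z
      · rw [indicator_of_mem h, hFdef, indicator_of_mem (show (y, z) ∈ S from ⟨h.1, h.2⟩)]
      · rw [indicator_of_notMem h, hFdef, indicator_of_notMem]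
        intro hmem
        exact h ⟨hmem.1, hmem.2⟩
    rw [lintegral_congr hfe, lintegral_indicator measurableSet_Icc]
    by_cases hz : x₁ ≤ z
    · rw [indicator_of_mem (mem_Ici.2 hz)]
      have ha : 0 < r z := hrpos z
      set w : ℝ → ℝ := fun y => r z ^ p * (r z + b * (z - y)) ^ (-p) with hwdef
      have hwcont : ContinuousOn w (Icc x₁ z) := by
        apply continuousOn_const.mul
        apply ContinuousOn.rpow_const
        · exact (continuous_const.add (continuous_const.mul
            (continuous_const.sub continuous_id))).continuousOn
        · intro y hy
          left
          have : 0 ≤ z - y := by linarith [hy.2]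
          nlinarith
      have hwint : IntegrableOn w (Icc x₁ z) := hwcont.integrableOn_compact isCompact_Icc
      have hwnn : 0 ≤ᵐ[volume.restrict (Icc x₁ z)] w := by
        rw [Filter.EventuallyLE, ae_restrict_iff' measurableSet_Icc]
        apply ae_of_all
        intro y hy
        have : 0 ≤ z - y := by linarith [hy.2]
        have h2 : 0 < r z + b * (z - y) := by nlinarith
        exact le_of_lt (mul_pos (Real.rpow_pos_of_pos ha p)
          (Real.rpow_pos_of_pos h2 (-p)))
      calc (∫⁻ y in Icc x₁ z, ENNReal.ofReal (g (y, z)))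
          = ∫⁻ y in Icc x₁ z, ENNReal.ofReal (w y) := by
            apply setLIntegral_congr_fun measurableSet_Icc
            show ∀ y ∈ Icc x₁ z, ENNReal.ofReal (g (y, z)) = ENNReal.ofReal (w y)
            intro y hy
            rw [hgeq y z hy.2]
        _ = ENNReal.ofReal (∫ y in Icc x₁ z, w y) :=
            (ofReal_integral_eq_lintegral_ofReal hwint hwnn).symm
        _ ≤ ENNReal.ofReal (r z / (2 - b)) := by
            apply ENNReal.ofReal_le_ofReal
            rw [integral_Icc_eq_integral_Ioc, ← intervalIntegral.integral_of_le hz]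
            exact auxA ha hb1 hb2 hz
    · rw [Icc_eq_empty (fun h => hz (le_trans h (le_refl z))), indicator_of_notMem]
      · simp
      · simpa using hz
  have htail : (∫⁻ z in Ici x₁, ENNReal.ofReal (r z / (2 - b))) < ⊤ := by
    have hle : ∀ z, (Ici x₁).indicator (fun z => ENNReal.ofReal (r z / (2 - b))) z ≤
        ENNReal.ofReal (2 - b)⁻¹ *
          (Ici x₀).indicator (fun z => ENNReal.ofReal (-(1 / q z))) z := by
      intro z
      by_cases hz : x₁ ≤ z
      · rw [indicator_of_mem (mem_Ici.2 hz), indicator_of_mem (mem_Ici.2 (le_trans hx₀x₁ hz))]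
        apply le_of_eq
        rw [← ENNReal.ofReal_mul (by
          have h2b : (0:ℝ) < 2 - b := by linarith
          positivity)]
        congr 1
        have : -(1 / q z) = r z := by rw [hreq z hz, one_div]
        rw [this, div_eq_inv_mul]
      · rw [indicator_of_notMem (by simpa using hz)]
        exact zero_le
    calc (∫⁻ z in Ici x₁, ENNReal.ofReal (r z / (2 - b)))
        = ∫⁻ z, (Ici x₁).indicator (fun z => ENNReal.ofReal (r z / (2 - b))) z :=
          (lintegral_indicator measurableSet_Ici _).symm
      _ ≤ ∫⁻ z, ENNReal.ofReal (2 - b)⁻¹ *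
            (Ici x₀).indicator (fun z => ENNReal.ofReal (-(1 / q z))) z := lintegral_mono hle
      _ = ENNReal.ofReal (2 - b)⁻¹ *
            ∫⁻ z, (Ici x₀).indicator (fun z => ENNReal.ofReal (-(1 / q z))) z :=
          lintegral_const_mul' _ _ ENNReal.ofReal_ne_top
      _ = ENNReal.ofReal (2 - b)⁻¹ * ∫⁻ z in Ici x₀, ENNReal.ofReal (-(1 / q z)) := by
          rw [lintegral_indicator measurableSet_Ici]
      _ < ⊤ := ENNReal.mul_lt_top ENNReal.ofReal_lt_top hint
  have hPartB : (∫⁻ y in Ici x₁, ENNReal.ofReal (Real.exp (-Q y)) *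
      ∫⁻ z in Ici y, ENNReal.ofReal (Real.exp (Q z))) < ⊤ := by
    have hstep : ∀ y, x₁ ≤ y → (ENNReal.ofReal (Real.exp (-Q y)) *
        ∫⁻ z in Ici y, ENNReal.ofReal (Real.exp (Q z))) ≤ ∫⁻ z, F (y, z) := by
      intro y hy
      rw [← lintegral_const_mul' _ _ ENNReal.ofReal_ne_top]
      calc (∫⁻ z in Ici y, ENNReal.ofReal (Real.exp (-Q y)) * ENNReal.ofReal (Real.exp (Q z)))
          = ∫⁻ z in Ici y, ENNReal.ofReal (Real.exp (Q z - Q y)) := by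
            apply lintegral_congr
            intro z
            rw [← ENNReal.ofReal_mul (Real.exp_nonneg _), ← Real.exp_add]
            ring_nf
        _ = ∫⁻ z, (Ici y).indicator (fun z => ENNReal.ofReal (Real.exp (Q z - Q y))) z :=
            (lintegral_indicator measurableSet_Ici _).symm
        _ ≤ ∫⁻ z, F (y, z) := by
            apply lintegral_mono
            intro z
            by_cases hz : y ≤ z
            · rw [indicator_of_mem (mem_Ici.2 hz)]
              exact hgF y z hy hz
            · rw [indicator_of_notMem (by simpa using hz)]
              exact zero_le
    calc (∫⁻ y in Ici x₁, ENNReal.ofReal (Real.exp (-Q y)) *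
          ∫⁻ z in Ici y, ENNReal.ofReal (Real.exp (Q z)))
        = ∫⁻ y, (Ici x₁).indicator (fun y => ENNReal.ofReal (Real.exp (-Q y)) *
            ∫⁻ z in Ici y, ENNReal.ofReal (Real.exp (Q z))) y :=
          (lintegral_indicator measurableSet_Ici _).symm
      _ ≤ ∫⁻ y, ∫⁻ z, F (y, z) := by
          apply lintegral_mono
          intro y
          by_cases hy : x₁ ≤ y
          · rw [indicator_of_mem (mem_Ici.2 hy)]
            exact hstep y hy
          · rw [indicator_of_notMem (by simpa using hy)]
            exact zero_le
      _ = ∫⁻ z, ∫⁻ y, F (y, z) := by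
          apply lintegral_lintegral_swap
          exact hFmeas.aemeasurable
      _ ≤ ∫⁻ z, (Ici x₁).indicator (fun z => ENNReal.ofReal (r z / (2 - b))) z :=
          lintegral_mono hInner
      _ = ∫⁻ z in Ici x₁, ENNReal.ofReal (r z / (2 - b)) :=
          lintegral_indicator measurableSet_Ici _
      _ < ⊤ := htail
  have hQconAt : ∀ y, 1 ≤ y → ContinuousAt Q y := by
    intro y hy
    have h0 : (0:ℝ) < y := lt_of_lt_of_le one_pos hy
    have hD : HasDerivAt (fun t => ∫ x in (1:ℝ)..t, q x) (q y) y := by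
      apply intervalIntegral.integral_hasDerivAt_right (hQint y hy)
      · exact hqcont.stronglyMeasurableAtFilter isOpen_Ioi y h0
      · exact hqcont.continuousAt (Ioi_mem_nhds h0)
    have hQfun : Q = fun t => 2 * ∫ x in (1:ℝ)..t, q x := funext hQ
    rw [hQfun]
    exact continuousAt_const.mul hD.continuousAt
  have hQcont : ContinuousOn Q (Ici 1) := fun y hy =>
    (hQconAt y hy).continuousWithinAt
  -- finiteness of M
  have hQbnd : ∀ z, x₀ ≤ z → Real.exp (Q z) ≤ Real.exp (Q x₀) * Real.exp (2 * q₀ * (z - x₀)) := by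
    intro z hz
    rw [← Real.exp_add]
    apply Real.exp_le_exp.2
    have h1 : Q z - Q x₀ = 2 * ∫ t in x₀..z, q t := hQsub x₀ z hx₀ hz
    have h2 : (∫ t in x₀..z, q t) ≤ ∫ t in x₀..z, q₀ := by
      apply intervalIntegral.integral_mono_on hz (hqleint x₀ z hx₀ hz)
      · exact intervalIntegrable_const
      · intro t ht
        exact hqub t ht.1
    rw [intervalIntegral.integral_const, smul_eq_mul] at h2
    nlinarith
  have hMfin : (∫⁻ z in Ici (1:ℝ), ENNReal.ofReal (Real.exp (Q z))) < ⊤ := by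
    have hsub : Ici (1:ℝ) ⊆ Icc 1 x₀ ∪ Ici x₀ := by
      intro z hz
      by_cases h : z ≤ x₀
      · exact Or.inl ⟨hz, h⟩
      · exact Or.inr (le_of_not_ge h)
    apply lt_of_le_of_lt (lintegral_mono_set hsub)
    apply lt_of_le_of_lt (lintegral_union_le _ _ _)
    apply ENNReal.add_lt_top.2
    constructor
    · -- compact piece
      obtain ⟨z₀, hz₀mem, hz₀⟩ := isCompact_Icc.exists_isMaxOn (nonempty_Icc.2 hx₀)
        ((Real.continuous_exp.comp_continuousOn (hQcont.mono Icc_subset_Ici_self)))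
      calc (∫⁻ z in Icc 1 x₀, ENNReal.ofReal (Real.exp (Q z)))
          ≤ ∫⁻ _ in Icc 1 x₀, ENNReal.ofReal (Real.exp (Q z₀)) := by
            apply setLIntegral_mono' measurableSet_Icc
            intro z hz
            exact ENNReal.ofReal_le_ofReal (hz₀ hz)
        _ = ENNReal.ofReal (Real.exp (Q z₀)) * volume (Icc 1 x₀) := setLIntegral_const _ _
        _ < ⊤ := ENNReal.mul_lt_top ENNReal.ofReal_lt_top (by
            rw [Real.volume_Icc]; exact ENNReal.ofReal_lt_top)
    · -- tail piece
      have hk : (0:ℝ) < -(2 * q₀) := by linarith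
      have hbd : IntegrableOn (fun z => (Real.exp (Q x₀) * Real.exp (-(2 * q₀) * x₀)) *
          Real.exp (-(-(2 * q₀)) * z)) (Ici x₀) := by
        apply Integrable.const_mul
        exact (integrableOn_Ici_iff_integrableOn_Ioi (by finiteness)).2 (exp_neg_integrableOn_Ioi x₀ hk)
      have hle : ∀ z ∈ Ici x₀, Real.exp (Q z) ≤ (Real.exp (Q x₀) *
          Real.exp (-(2 * q₀) * x₀)) * Real.exp (-(-(2 * q₀)) * z) := by
        intro z hz
        have h1 := hQbnd z hz
        have h2 : Real.exp (2 * q₀ * (z - x₀)) =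
            Real.exp (-(2 * q₀) * x₀) * Real.exp (-(-(2 * q₀)) * z) := by
          rw [← Real.exp_add]
          congr 1
          ring
        rw [h2, ← mul_assoc] at h1
        exact h1
      calc (∫⁻ z in Ici x₀, ENNReal.ofReal (Real.exp (Q z)))
          ≤ ∫⁻ z in Ici x₀, ENNReal.ofReal ((Real.exp (Q x₀) * Real.exp (-(2 * q₀) * x₀)) *
              Real.exp (-(-(2 * q₀)) * z)) := by
            apply setLIntegral_mono' measurableSet_Ici
            intro z hz
            exact ENNReal.ofReal_le_ofReal (hle z hz)
        _ < ⊤ := hbd.lintegral_lt_top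
  -- Part A
  have hPartA : (∫⁻ y in Ico (1:ℝ) x₁, ENNReal.ofReal (Real.exp (-Q y)) *
      ∫⁻ z in Ici y, ENNReal.ofReal (Real.exp (Q z))) < ⊤ := by
    obtain ⟨y₀, hy₀mem, hy₀⟩ := isCompact_Icc.exists_isMaxOn (nonempty_Icc.2 h1x₁)
      (Real.continuous_exp.comp_continuousOn
        ((hQcont.mono Icc_subset_Ici_self).neg))
    have hb : ∀ y ∈ Ico (1:ℝ) x₁, ENNReal.ofReal (Real.exp (-Q y)) *
        (∫⁻ z in Ici y, ENNReal.ofReal (Real.exp (Q z))) ≤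
        ENNReal.ofReal (Real.exp (-Q y₀)) * ∫⁻ z in Ici (1:ℝ), ENNReal.ofReal (Real.exp (Q z)) := by
      intro y hy
      apply mul_le_mul'
      · exact ENNReal.ofReal_le_ofReal (hy₀ ⟨hy.1, le_of_lt hy.2⟩)
      · exact lintegral_mono_set (Ici_subset_Ici.2 hy.1)
    calc (∫⁻ y in Ico (1:ℝ) x₁, ENNReal.ofReal (Real.exp (-Q y)) *
          ∫⁻ z in Ici y, ENNReal.ofReal (Real.exp (Q z)))
        ≤ ∫⁻ _ in Ico (1:ℝ) x₁, ENNReal.ofReal (Real.exp (-Q y₀)) *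
            ∫⁻ z in Ici (1:ℝ), ENNReal.ofReal (Real.exp (Q z)) :=
          setLIntegral_mono' measurableSet_Ico hb
      _ = (ENNReal.ofReal (Real.exp (-Q y₀)) *
            ∫⁻ z in Ici (1:ℝ), ENNReal.ofReal (Real.exp (Q z))) * volume (Ico 1 x₁) :=
          setLIntegral_const _ _
      _ < ⊤ := by
          apply ENNReal.mul_lt_top
          · exact ENNReal.mul_lt_top ENNReal.ofReal_lt_top hMfin
          · rw [Real.volume_Ico]; exact ENNReal.ofReal_lt_top
  -- combine
  have hsplit : Ici (1:ℝ) = Ico 1 x₁ ∪ Ici x₁ := (Ico_union_Ici_eq_Ici h1x₁).symm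
  rw [hsplit]
  apply lt_of_le_of_lt (lintegral_union_le _ _ _)
  exact ENNReal.add_lt_top.2 ⟨hPartA, hPartB⟩
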